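/- Let L be a positive multiple of l. Then for every k ≥ 0 the 2×2 matrix with first row (s_{k+L}, s_{k+L−1}) and second row (t_{k+L}, t_{k+L−1}) equals the matrix product D_L · M_k, where M_k is the 2×2 matrix with first row (s_k, s_{k−1}) and second row (t_k, t_{k−1}). -/

import Mathlib

/-- For a positive multiple `L` of `l` and every `k ≥ 0`, the matrix with rows
`(s (k+L), s (k+L-1))` and `(t (k+L), t (k+L-1))` equals `D_L` times the matrix with
rows `(s k, s (k-1))` and `(t k, t (k-1))`. -/
theorem convergent_matrix_identity
    (a s t : ℤ → ℤ) (l : ℕ) (hl : 1 ≤ l)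
    (ha_pos : ∀ k : ℤ, 0 ≤ k → 0 < a k)
    (ha_per : ∀ k : ℤ, 0 ≤ k → a (k + l) = a k)
    (hs_neg : s (-1) = 1) (ht_neg : t (-1) = 0)
    (hs_zero : s 0 = a 0) (ht_zero : t 0 = 1)
    (hs_rec : ∀ k : ℤ, 1 ≤ k → s k = a k * s (k - 1) + s (k - 2))
    (ht_rec : ∀ k : ℤ, 1 ≤ k → t k = a k * t (k - 1) + t (k - 2))
    (L : ℕ) (hL_pos : 0 < L) (hL_mul : l ∣ L) :
    ∀ k : ℤ, 0 ≤ k →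
      !![s (k + L), s (k + L - 1); t (k + L), t (k + L - 1)] =
        !![s ((L : ℤ) - 1), s ((L : ℤ) - 2); t ((L : ℤ) - 1), t ((L : ℤ) - 2)] *
          !![s k, s (k - 1); t k, t (k - 1)] := by
  have hL1 : (1 : ℤ) ≤ (L : ℤ) := by exact_mod_cast hL_pos
  -- periodicity with period L
  have haL : ∀ k : ℤ, 0 ≤ k → a (k + L) = a k := by
    obtain ⟨m, rfl⟩ := hL_mul
    clear hL_pos hL1
    intro k hk
    induction m with
    | zero => simp
    | succ n ih =>
      have h1 : (k + ((l * (n + 1) : ℕ) : ℤ)) = (k + (l * n : ℕ)) + l := by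
        push_cast; ring
      rw [h1, ha_per _ (add_nonneg hk (by positivity))]
      exact ih
  intro k
  refine Int.le_induction
    (motive := fun k _ => !![s (k + L), s (k + L - 1); t (k + L), t (k + L - 1)] =
        !![s ((L : ℤ) - 1), s ((L : ℤ) - 2); t ((L : ℤ) - 1), t ((L : ℤ) - 2)] *
          !![s k, s (k - 1); t k, t (k - 1)]) ?_ ?_ k
  ·
    have haL0 : a (L : ℤ) = a 0 := by simpa using haL 0 le_rfl
    have hsL : s (L : ℤ) = a 0 * s ((L : ℤ) - 1) + s ((L : ℤ) - 2) := by
      rw [← haL0]; exact hs_rec _ hL1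
    have htL : t (L : ℤ) = a 0 * t ((L : ℤ) - 1) + t ((L : ℤ) - 2) := by
      rw [← haL0]; exact ht_rec _ hL1
    show !![s (0 + (L : ℤ)), s (0 + (L : ℤ) - 1); t (0 + (L : ℤ)), t (0 + (L : ℤ) - 1)] =
        !![s ((L : ℤ) - 1), s ((L : ℤ) - 2); t ((L : ℤ) - 1), t ((L : ℤ) - 2)] *
          !![s 0, s (0 - 1); t 0, t (0 - 1)]
    ext i j
    fin_cases i <;> fin_cases j <;>
      simp [Matrix.mul_apply, Fin.sum_univ_two, hs_neg, ht_neg, hs_zero, ht_zero, hsL, htL] <;>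
      ring
  · intro k hk ih
    -- extract entrywise identities from ih
    have e00 : s (k + L) = s ((L : ℤ) - 1) * s k + s ((L : ℤ) - 2) * t k := by
      have := congrFun (congrFun ih 0) 0
      simpa [Matrix.mul_apply, Fin.sum_univ_two] using this
    have e01 : s (k + L - 1) = s ((L : ℤ) - 1) * s (k - 1) + s ((L : ℤ) - 2) * t (k - 1) := by
      have := congrFun (congrFun ih 0) 1
      simpa [Matrix.mul_apply, Fin.sum_univ_two] using this
    have e10 : t (k + L) = t ((L : ℤ) - 1) * s k + t ((L : ℤ) - 2) * t k := by
      have := congrFun (congrFun ih 1) 0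
      simpa [Matrix.mul_apply, Fin.sum_univ_two] using this
    have e11 : t (k + L - 1) = t ((L : ℤ) - 1) * s (k - 1) + t ((L : ℤ) - 2) * t (k - 1) := by
      have := congrFun (congrFun ih 1) 1
      simpa [Matrix.mul_apply, Fin.sum_univ_two] using this
    have haper : a (k + 1 + L) = a (k + 1) := haL (k + 1) (by omega)
    have hs1 : s (k + 1 + L) = a (k + 1) * s (k + L) + s (k + L - 1) := by
      have := hs_rec (k + 1 + L) (by omega)
      rw [haper] at this
      convert this using 3 <;> ring
    have ht1 : t (k + 1 + L) = a (k + 1) * t (k + L) + t (k + L - 1) := by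
      have := ht_rec (k + 1 + L) (by omega)
      rw [haper] at this
      convert this using 3 <;> ring
    have hs2 : s (k + 1) = a (k + 1) * s k + s (k - 1) := by
      have := hs_rec (k + 1) (by omega)
      convert this using 3 <;> ring
    have ht2 : t (k + 1) = a (k + 1) * t k + t (k - 1) := by
      have := ht_rec (k + 1) (by omega)
      convert this using 3 <;> ring
    have f00 : s (k + 1 + L) = s ((L : ℤ) - 1) * s (k + 1) + s ((L : ℤ) - 2) * t (k + 1) := by
      rw [hs1, hs2, ht2, e00, e01]; ring
    have f10 : t (k + 1 + L) = t ((L : ℤ) - 1) * s (k + 1) + t ((L : ℤ) - 2) * t (k + 1) := by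
      rw [ht1, hs2, ht2, e10, e11]; ring
    have hk1 : k + 1 + (L : ℤ) - 1 = k + L := by ring
    have hk2 : k + 1 - 1 = k := by ring
    rw [Matrix.mul_fin_two, hk1, hk2, f00, f10, e00, e10]
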